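/- If A is a Hermitian operator on a finite-dimensional Hilbert space H and x ∈ F(A,λ)⊥ with x ≠ 0, then ‖Ax‖ > λ‖x‖ for every λ ≥ 0. -/

import Mathlib

open InnerProductSpace RCLike Filter Topology MeasureTheory Set

variable {𝕜 E : Type*} [RCLike 𝕜] [NormedAddCommGroup E] [InnerProductSpace 𝕜 E]

local notation "⟪" x ", " y "⟫" => @inner 𝕜 _ _ x y

/-- `PowRel A n x y` means `x ∈ D(Aⁿ)` and `Aⁿ x = y`. -/
inductive PowRel (A : E →ₗ.[𝕜] E) : ℕ → E → E → Prop
  | zero (x : E) : PowRel A 0 x x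
  | succ {n : ℕ} {x y : E} (h : PowRel A n x y) (hy : y ∈ A.domain) :
      PowRel A (n + 1) x (A ⟨y, hy⟩)

/-- `F(A,λ)` for an unbounded operator. -/
def Fset (A : E →ₗ.[𝕜] E) (lam : ℝ) : Set E :=
  {x | ∀ n : ℕ, ∃ y : E, PowRel A n x y ∧ ‖y‖ ≤ lam ^ n * ‖x‖}

/-- orthogonal complement of a set -/
def ocompl (𝕜' : Type*) {E' : Type*} [RCLike 𝕜'] [NormedAddCommGroup E']
    [InnerProductSpace 𝕜' E'] (S : Set E') : Set E' :=
  {y | ∀ x ∈ S, (inner 𝕜' x y : 𝕜') = 0}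

/-- Hermitian (symmetric) partially defined operator. -/
def IsHermitianPMap (A : E →ₗ.[𝕜] E) : Prop :=
  ∀ x y : A.domain, ⟪A x, (y : E)⟫ = ⟪(x : E), A y⟫

/-- Self-adjoint partially defined operator (densely defined, symmetric, maximal). -/
def IsSelfAdjointPMap (A : E →ₗ.[𝕜] E) : Prop :=
  Dense (A.domain : Set E) ∧ IsHermitianPMap A ∧
    ∀ y z : E, (∀ x : A.domain, ⟪A x, y⟫ = ⟪(x : E), z⟫) →
      ∃ hy : y ∈ A.domain, A ⟨y, hy⟩ = z

/-- `F(T,λ)` for a bounded operator. -/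
def FsetB (T : E →L[𝕜] E) (lam : ℝ) : Set E :=
  {x | ∀ n : ℕ, ‖(T ^ n) x‖ ≤ lam ^ n * ‖x‖}

/-- Spectral family (resolution of the identity). -/
def IsSpectralFamily (P : ℝ → (E →L[𝕜] E)) : Prop :=
  (∀ t, IsIdempotentElem (P t)) ∧
  (∀ t x y, ⟪P t x, y⟫ = ⟪x, P t y⟫) ∧
  (∀ s t : ℝ, s ≤ t → ∀ x, P t (P s x) = P s x) ∧
  (∀ t x, Tendsto (fun s => P s x) (𝓝[>] t) (𝓝 (P t x))) ∧
  (∀ x, Tendsto (fun t => P t x) atBot (𝓝 (0 : E))) ∧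
  (∀ x, Tendsto (fun t => P t x) atTop (𝓝 x))

open Classical in
/-- Lebesgue–Stieltjes measure of a monotone right-continuous function (junk value otherwise). -/
noncomputable def stMeasure (f : ℝ → ℝ) : Measure ℝ :=
  if h : Monotone f ∧ ∀ x, ContinuousWithinAt f (Ici x) x then
    StieltjesFunction.measure ⟨f, h.1, h.2⟩ else 0

/-- `F(A,λ)` for an everywhere defined linear operator. -/
def FsetL (T : E →ₗ[𝕜] E) (lam : ℝ) : Set E :=
  {x | ∀ n : ℕ, ‖(T ^ n) x‖ ≤ lam ^ n * ‖x‖}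

theorem stmt4 [FiniteDimensional 𝕜 E] (A : E →ₗ[𝕜] E) (hA : A.IsSymmetric)
    (lam : ℝ) (hlam : 0 ≤ lam) (x : E) (hx : x ∈ ocompl 𝕜 (FsetL A lam)) (hx0 : x ≠ 0) :
    lam * ‖x‖ < ‖A x‖ := by
  classical
  set n := Module.finrank 𝕜 E with hn
  have hn' : Module.finrank 𝕜 E = n := rfl
  set b := hA.eigenvectorBasis hn' with hb
  set μ := hA.eigenvalues hn' with hμ
  set c : Fin n → 𝕜 := fun i => b.repr x i with hc
  -- eigenvectors with |μ i| ≤ lam are in FsetL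
  have hmem : ∀ i : Fin n, |μ i| ≤ lam → b i ∈ FsetL A lam := by
    intro i hi m
    have hpow : (A ^ m) (b i) = ((μ i : 𝕜) ^ m) • b i := by
      induction m with
      | zero => simp
      | succ m ih =>
        rw [pow_succ, Module.End.mul_apply, hA.apply_eigenvectorBasis, _root_.map_smul, ih,
          smul_smul, ← pow_succ']
    rw [hpow, norm_smul]
    have : ‖(μ i : 𝕜) ^ m‖ = |μ i| ^ m := by
      rw [norm_pow, RCLike.norm_ofReal]
    rw [this]
    have : |μ i| ^ m ≤ lam ^ m := pow_le_pow_left₀ (abs_nonneg _) hi m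
    nlinarith [norm_nonneg (b i)]
  have hcz : ∀ i : Fin n, |μ i| ≤ lam → c i = 0 := by
    intro i hi
    have := hx (b i) (hmem i hi)
    rwa [← b.repr_apply_apply] at this
  -- norms squared
  have hnormx : ‖x‖ ^ 2 = ∑ i, ‖c i‖ ^ 2 := by
    rw [← b.repr.norm_map x, EuclideanSpace.norm_eq, Real.sq_sqrt (by positivity)]
  have hAx : ‖A x‖ ^ 2 = ∑ i, (μ i) ^ 2 * ‖c i‖ ^ 2 := by
    rw [← b.repr.norm_map (A x), EuclideanSpace.norm_eq, Real.sq_sqrt (by positivity)]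
    refine Finset.sum_congr rfl fun i _ => ?_
    rw [hA.eigenvectorBasis_apply_self_apply hn' x i, norm_mul, mul_pow,
      RCLike.norm_ofReal, sq_abs]
  -- exists i0 with c i0 ≠ 0
  obtain ⟨i0, hi0⟩ : ∃ i, c i ≠ 0 := by
    by_contra h
    push_neg at h
    apply hx0
    have : b.repr x = 0 := by ext i; exact h i
    simpa using b.repr.map_eq_zero_iff.mp this
  have hi0' : lam < |μ i0| := by
    by_contra h
    exact hi0 (hcz i0 (not_lt.mp h))
  have key : lam ^ 2 * ‖x‖ ^ 2 < ‖A x‖ ^ 2 := by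
    rw [hnormx, hAx, Finset.mul_sum]
    refine Finset.sum_lt_sum ?_ ⟨i0, Finset.mem_univ i0, ?_⟩
    · intro i _
      rcases le_or_gt (|μ i|) lam with h | h
      · rw [hcz i h]; simp
      · have : lam ^ 2 ≤ (μ i) ^ 2 := by
          rw [← sq_abs (μ i)]; exact pow_le_pow_left₀ hlam h.le 2
        nlinarith [sq_nonneg ‖c i‖]
    · have h1 : lam ^ 2 < (μ i0) ^ 2 := by
        rw [← sq_abs (μ i0)]; exact pow_lt_pow_left₀ hi0' hlam (by norm_num)
      have h2 : 0 < ‖c i0‖ ^ 2 := pow_pos (norm_pos_iff.mpr hi0) 2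
      nlinarith
  have := lt_of_pow_lt_pow_left₀ 2 (norm_nonneg (A x)) (by
    calc (lam * ‖x‖) ^ 2 = lam ^ 2 * ‖x‖ ^ 2 := by ring
    _ < ‖A x‖ ^ 2 := key)
  exact this
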